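/- arXiv:1503.04617 — 3 statements merged into one kernel-verified Lean document; each statement's English description precedes it below -/
import Mathlib

section
/- For every integer n > 0 and i ∈ {1,2,3}, defining g(m) = bc(1 − 2b/m)(1 − 2c/m)/(2m²) with b = ⌊m/4⌋ and c = ⌊(m+2)/4⌋, one has g(4k + i + 4) ≥ g(4k + i) for all integers k > 0; consequently g(N) ≥ 1/162 for all N ≥ 4. -/
/-- `g(m) = b·c·(1 − 2b/m)(1 − 2c/m)/(2m²)` with `b = ⌊m/4⌋` and `c = ⌊(m+2)/4⌋`. -/
noncomputable def solenoidG (m : ℕ) : ℝ :=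
  ((m / 4 : ℕ) : ℝ) * (((m + 2) / 4 : ℕ) : ℝ) *
      (1 - 2 * ((m / 4 : ℕ) : ℝ) / (m : ℝ)) * (1 - 2 * (((m + 2) / 4 : ℕ) : ℝ) / (m : ℝ)) /
    (2 * (m : ℝ) ^ 2)

lemma solenoidG_form (m b c : ℕ) (hm : m ≠ 0) (hb : m / 4 = b) (hc : (m + 2) / 4 = c) :
    solenoidG m = (b : ℝ) * (c : ℝ) * ((m : ℝ) - 2 * b) * ((m : ℝ) - 2 * c) / (2 * (m : ℝ) ^ 4) := by
  have hm' : (m : ℝ) ≠ 0 := Nat.cast_ne_zero.mpr hm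
  unfold solenoidG
  rw [hb, hc, div_eq_div_iff (by positivity) (by positivity)]
  field_simp

lemma solenoidG_mul4 (k : ℕ) (hk : 0 < k) : solenoidG (4 * k) = 1 / 128 := by
  rw [solenoidG_form (4 * k) k k (by omega) (by omega) (by omega)]
  have hk' : (k : ℝ) ≠ 0 := Nat.cast_ne_zero.mpr hk.ne'
  push_cast
  field_simp
  ring

lemma solenoidG_mono1 (k : ℕ) (hk : 0 < k) :
    solenoidG (4 * k + 1) ≤ solenoidG (4 * k + 1 + 4) := by
  rw [solenoidG_form (4 * k + 1) k k (by omega) (by omega) (by omega),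
    solenoidG_form (4 * k + 1 + 4) (k + 1) (k + 1) (by omega) (by omega) (by omega)]
  have hx : (0 : ℝ) ≤ (k : ℝ) := Nat.cast_nonneg k
  set x : ℝ := (k : ℝ)
  have h1 : (0 : ℝ) < 2 * ((4 * x + 1)) ^ 4 := by positivity
  have h2 : (0 : ℝ) < 2 * ((4 * x + 1 + 4)) ^ 4 := by positivity
  push_cast
  rw [div_le_div_iff₀ h1 h2]
  nlinarith [pow_nonneg hx 2, pow_nonneg hx 3, pow_nonneg hx 4, pow_nonneg hx 5, hx]

lemma solenoidG_mono2 (k : ℕ) (hk : 0 < k) :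
    solenoidG (4 * k + 2) ≤ solenoidG (4 * k + 2 + 4) := by
  rw [solenoidG_form (4 * k + 2) k (k + 1) (by omega) (by omega) (by omega),
    solenoidG_form (4 * k + 2 + 4) (k + 1) (k + 2) (by omega) (by omega) (by omega)]
  have hx : (0 : ℝ) ≤ (k : ℝ) := Nat.cast_nonneg k
  set x : ℝ := (k : ℝ)
  have h1 : (0 : ℝ) < 2 * ((4 * x + 2)) ^ 4 := by positivity
  have h2 : (0 : ℝ) < 2 * ((4 * x + 2 + 4)) ^ 4 := by positivity
  push_cast
  rw [div_le_div_iff₀ h1 h2]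
  nlinarith [pow_nonneg hx 2, pow_nonneg hx 3, pow_nonneg hx 4, pow_nonneg hx 5, hx]

lemma solenoidG_mono3 (k : ℕ) (hk : 0 < k) :
    solenoidG (4 * k + 3) ≤ solenoidG (4 * k + 3 + 4) := by
  rw [solenoidG_form (4 * k + 3) k (k + 1) (by omega) (by omega) (by omega),
    solenoidG_form (4 * k + 3 + 4) (k + 1) (k + 2) (by omega) (by omega) (by omega)]
  have hx : (0 : ℝ) ≤ (k : ℝ) := Nat.cast_nonneg k
  set x : ℝ := (k : ℝ)
  have h1 : (0 : ℝ) < 2 * ((4 * x + 3)) ^ 4 := by positivity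
  have h2 : (0 : ℝ) < 2 * ((4 * x + 3 + 4)) ^ 4 := by positivity
  push_cast
  rw [div_le_div_iff₀ h1 h2]
  nlinarith [pow_nonneg hx 2, pow_nonneg hx 3, pow_nonneg hx 4, pow_nonneg hx 5,
    pow_nonneg hx 6, pow_nonneg hx 7, hx]

lemma solenoidG_mono (i : ℕ) (hi : i ∈ ({1, 2, 3} : Finset ℕ)) (k : ℕ) (hk : 0 < k) :
    solenoidG (4 * k + i) ≤ solenoidG (4 * k + i + 4) := by
  fin_cases hi
  · exact solenoidG_mono1 k hk
  · exact solenoidG_mono2 k hk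
  · exact solenoidG_mono3 k hk

lemma solenoidG_base (i : ℕ) (hi : i ∈ ({1, 2, 3} : Finset ℕ)) :
    (1 : ℝ) / 162 ≤ solenoidG (4 * 1 + i) := by
  fin_cases hi
  · rw [show 4 * 1 + 1 = 5 from rfl, solenoidG_form 5 1 1 (by omega) (by omega) (by omega)]
    norm_num
  · rw [show 4 * 1 + 2 = 6 from rfl, solenoidG_form 6 1 2 (by omega) (by omega) (by omega)]
    norm_num
  · rw [show 4 * 1 + 3 = 7 from rfl, solenoidG_form 7 1 2 (by omega) (by omega) (by omega)]
    norm_num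

lemma solenoidG_lb (i : ℕ) (hi : i ∈ ({1, 2, 3} : Finset ℕ)) :
    ∀ k : ℕ, 1 ≤ k → (1 : ℝ) / 162 ≤ solenoidG (4 * k + i) := by
  intro k hk
  induction k, hk using Nat.le_induction with
  | base => exact solenoidG_base i hi
  | succ n hn ih =>
    have h := solenoidG_mono i hi n (by omega)
    have : 4 * (n + 1) + i = 4 * n + i + 4 := by ring
    rw [this]
    linarith

/-- For every `i ∈ {1,2,3}` one has `g(4k + i + 4) ≥ g(4k + i)` for all
integers `k > 0`; consequently `g(N) ≥ 1/162` for all `N ≥ 4`. -/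
theorem solenoidG_bounds :
    (∀ i ∈ ({1, 2, 3} : Finset ℕ), ∀ k : ℕ, 0 < k →
      solenoidG (4 * k + i) ≤ solenoidG (4 * k + i + 4)) ∧
    (∀ N : ℕ, 4 ≤ N → 1 / 162 ≤ solenoidG N) := by
  constructor
  · exact solenoidG_mono
  · intro N hN
    obtain ⟨k, i, hi, rfl⟩ : ∃ k i, i < 4 ∧ N = 4 * k + i :=
      ⟨N / 4, N % 4, Nat.mod_lt _ (by norm_num), by omega⟩
    interval_cases i
    · rw [show 4 * k + 0 = 4 * k from rfl, solenoidG_mul4 k (by omega)]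
      norm_num
    · exact solenoidG_lb 1 (by decide) k (by omega)
    · exact solenoidG_lb 2 (by decide) k (by omega)
    · exact solenoidG_lb 3 (by decide) k (by omega)
end

section
/- Let f, g : N → R satisfy f(0) = g(0) = 0, f(n) ≥ max over 0 ≤ k ≤ (n−1)/2 of [k(n−2k) + 2g(n−2k−1)], and g(n) ≥ max over 0 ≤ k ≤ (n−1)/4 of [k(n−4k) + g(n−4k−1) + 2g(2k)], together with f(n) ≤ n²/4 and g(n) ≤ n(n+1)/8 for all n. Then lim_{n→∞} f(n)/(4n²) = 1/16. -/
set_option maxHeartbeats 1000000 in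
lemma eel_hstar (g : ℕ → ℝ) (hg0 : g 0 = 0)
    (hg : ∀ n k : ℕ, 4 * k + 1 ≤ n →
      (k : ℝ) * ((n : ℝ) - 4 * k) + g (n - 4 * k - 1) + 2 * g (2 * k) ≤ g n)
    (hgpos : ∀ n : ℕ, 0 ≤ g n) :
    ∀ n : ℕ, (n : ℝ) * ((n : ℝ) + 1) / 2 - 4 * g n ≤ 10 * n * Real.sqrt n := by
  intro n
  induction n using Nat.strong_induction_on with
  | _ n ih =>
  by_cases hn : n < 100
  · rcases Nat.eq_zero_or_pos n with h0 | h1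
    · subst h0; simp [hg0]
    have hgn := hgpos n
    have ht2 : Real.sqrt n ^ 2 = (n : ℝ) := Real.sq_sqrt (by positivity)
    have ht0 : 0 ≤ Real.sqrt n := Real.sqrt_nonneg _
    have hn1 : (1 : ℝ) ≤ n := by exact_mod_cast h1
    have hn99 : (n : ℝ) ≤ 99 := by exact_mod_cast Nat.lt_succ_iff.mp hn
    have key : (n : ℝ) + 1 ≤ 20 * Real.sqrt n := by
      refine le_of_pow_le_pow_left₀ two_ne_zero (by positivity) ?_
      have : (20 * Real.sqrt n) ^ 2 = 400 * (n:ℝ) := by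
        rw [mul_pow, ht2]; norm_num
      rw [this]; nlinarith [hn1, hn99]
    nlinarith [mul_le_mul_of_nonneg_left key (by positivity : (0:ℝ) ≤ (n:ℝ)/2)]
  · push_neg at hn
    obtain ⟨s, hs⟩ : ∃ s, s = Nat.sqrt n := ⟨_, rfl⟩
    obtain ⟨k, hk⟩ : ∃ k, k = s / 4 := ⟨_, rfl⟩
    have hss : s * s ≤ n := by rw [hs]; simpa [pow_two] using Nat.sqrt_le' n
    have hlt : n < (s + 1) * (s + 1) := by
      rw [hs]; simpa [pow_two, Nat.succ_eq_add_one] using Nat.lt_succ_sqrt' n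
    have hs10 : 10 ≤ s := by
      rw [hs]; exact Nat.le_sqrt.mpr (by omega)
    have h10s : 10 * s ≤ n := le_trans (Nat.mul_le_mul_right s hs10) hss
    have h4ks : 4 * k ≤ s ∧ s ≤ 4 * k + 3 := by omega
    have h4kn : 4 * k + 1 ≤ n := by omega
    have hk16 : 16 * (k * k) ≤ n :=
      le_trans (by calc 16 * (k * k) = (4 * k) * (4 * k) := by ring
                      _ ≤ s * s := Nat.mul_le_mul h4ks.1 h4ks.1) hss
    obtain ⟨m, hm⟩ : ∃ m, m = n - 4 * k - 1 := ⟨_, rfl⟩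
    have h2m : n ≤ 2 * m := by omega
    have hmlt : m < n := by omega
    have h2klt : 2 * k < n := by omega
    obtain ⟨t, htdef⟩ : ∃ t, t = Real.sqrt n := ⟨_, rfl⟩
    obtain ⟨u, hudef⟩ : ∃ u, u = Real.sqrt m := ⟨_, rfl⟩
    obtain ⟨v, hvdef⟩ : ∃ v, v = Real.sqrt ((2 * k : ℕ) : ℝ) := ⟨_, rfl⟩
    have ht0 : 0 ≤ t := htdef ▸ Real.sqrt_nonneg _
    have hu0 : 0 ≤ u := hudef ▸ Real.sqrt_nonneg _
    have hv0 : 0 ≤ v := hvdef ▸ Real.sqrt_nonneg _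
    have ht2 : t ^ 2 = (n : ℝ) := by rw [htdef]; exact Real.sq_sqrt (by positivity)
    have hu2 : u ^ 2 = (m : ℝ) := by rw [hudef]; exact Real.sq_sqrt (by positivity)
    have hv2 : v ^ 2 = 2 * (k : ℝ) := by
      rw [hvdef, Real.sq_sqrt (by positivity)]; push_cast; ring
    have hscast : (s : ℝ) ≤ t := by
      rw [htdef, show ((s:ℝ)) = Real.sqrt ((s:ℝ)^2) from (Real.sqrt_sq (Nat.cast_nonneg s)).symm]
      exact Real.sqrt_le_sqrt (by exact_mod_cast (by nlinarith [hss] : s^2 ≤ n))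
    have hts1 : t ≤ (s : ℝ) + 1 := by
      rw [htdef, show ((s:ℝ)+1) = Real.sqrt (((s:ℝ)+1)^2) from
        (Real.sqrt_sq (by positivity)).symm]
      refine Real.sqrt_le_sqrt ?_
      have h1 : (n:ℝ) ≤ ((s:ℝ)+1) * ((s:ℝ)+1) := by exact_mod_cast le_of_lt hlt
      nlinarith [h1]
    have ht10 : (10 : ℝ) ≤ t := le_trans (by exact_mod_cast hs10) hscast
    have hMcast : (m : ℝ) = (n : ℝ) - 4 * k - 1 := by
      have h1 : m = n - (4 * k + 1) := by omega
      rw [h1, Nat.cast_sub h4kn]; push_cast; ring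
    have hKcast : (4 * (k:ℝ)) ≤ (s : ℝ) := by exact_mod_cast h4ks.1
    have hK3 : (s : ℝ) ≤ 4 * (k:ℝ) + 3 := by exact_mod_cast h4ks.2
    have hK0 : (0:ℝ) ≤ (k:ℝ) := Nat.cast_nonneg k
    have e4 : 4 * (k:ℝ)^2 ≤ (n:ℝ) / 4 := by
      have h1 : (16 : ℝ) * ((k:ℝ) * (k:ℝ)) ≤ (n : ℝ) := by exact_mod_cast hk16
      nlinarith
    have htu : u ≤ t := by
      rw [hudef, htdef]; exact Real.sqrt_le_sqrt (by exact_mod_cast le_of_lt hmlt)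
    have h2u : (n : ℝ) ≤ 2 * u ^ 2 := by rw [hu2]; exact_mod_cast h2m
    have h2v : 2 * v ^ 2 ≤ t := by
      rw [hv2]
      calc 2 * (2 * (k : ℝ)) = 4 * k := by ring
        _ ≤ s := hKcast
        _ ≤ t := hscast
    -- cube difference
    have hnt : (n:ℝ) * t = t^3 := by rw [← ht2]; ring
    have hmu : (m:ℝ) * u = u^3 := by rw [← hu2]; ring
    have hd : t^2 - u^2 = 4*(k:ℝ) + 1 := by rw [ht2, hu2, hMcast]; ring
    have e1 : 40 * (k:ℝ) * u + 10 * u ≤ 10 * (n:ℝ) * t - 10 * (m:ℝ) * u := by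
      have hident : t^3 - u^3 - (t^2 - u^2)*u = t^2*(t-u) := by ring
      have hpos : 0 ≤ t^2*(t-u) := mul_nonneg (sq_nonneg t) (by linarith)
      have hq : (t^2 - u^2)*u = (4*(k:ℝ)+1)*u := by rw [hd]
      have hcube : (4*(k:ℝ)+1)*u ≤ t^3 - u^3 := by
        rw [← hq]; linarith [hident, hpos]
      have hexp : (4*(k:ℝ)+1)*u = 4*(k:ℝ)*u + u := by ring
      linarith [hcube, hnt, hmu, hexp.symm.le, hexp.le]
    have h10u : 7 * t ≤ 10 * u := by
      refine le_of_pow_le_pow_left₀ two_ne_zero (by positivity) ?_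
      have h1 : (7*t)^2 = 49 * (n:ℝ) := by rw [mul_pow, ht2]; norm_num
      have h2 : (10*u)^2 = 100 * u^2 := by ring
      rw [h1, h2]; linarith [h2u, sq_nonneg u]
    have hk4t : t - 3 ≤ 4 * (k:ℝ) + 1 := by linarith
    have e2 : 7 * (n:ℝ) - 21 * t ≤ 40 * (k:ℝ) * u + 10 * u := by
      have hprod : (t - 3) * (7 * t) ≤ (4 * (k:ℝ) + 1) * (10 * u) :=
        mul_le_mul hk4t h10u (by positivity) (by positivity)
      have hexp1 : (t - 3) * (7 * t) = 7*t^2 - 21*t := by ring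
      have hexp2 : (4 * (k:ℝ) + 1) * (10 * u) = 40*(k:ℝ)*u + 10*u := by ring
      rw [hexp1, hexp2, ht2] at hprod; linarith
    have e3 : 20 * v^3 ≤ 5/2 * (n:ℝ) := by
      have hvt4 : v ≤ t / 4 := by
        refine le_of_pow_le_pow_left₀ two_ne_zero (by positivity) ?_
        have ht8 : 0 ≤ t * (t - 8) := mul_nonneg ht0 (by linarith)
        have : (t/4)^2 = t^2/16 := by ring
        nlinarith [h2v, sq_nonneg v]
      have hvv : v^2 * v ≤ (t/2) * (t/4) :=
        mul_le_mul (by linarith [h2v]) hvt4 hv0 (by positivity)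
      have : (t/2) * (t/4) = t^2/8 := by ring
      rw [this, ht2] at hvv
      have hv3e : v^3 = v^2 * v := by ring
      rw [hv3e]; linarith
    have e5 : 21 * t ≤ 13/4 * (n:ℝ) := by
      have := mul_nonneg ht0 (by linarith : (0:ℝ) ≤ 13*t - 84)
      nlinarith [ht2]
    have hrec := hg n k h4kn
    rw [← hm] at hrec
    have ihm := ih m hmlt
    have ih2k := ih (2 * k) h2klt
    rw [← hudef] at ihm
    rw [← hvdef] at ih2k
    push_cast at ih2k
    have hv3 : 40 * (k:ℝ) * v = 20 * v^3 := by linear_combination (-20*v) * hv2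
    have hid : (n:ℝ)*((n:ℝ)+1)/2 - 4*(k:ℝ)*((n:ℝ)-4*(k:ℝ)) - ((m:ℝ)*((m:ℝ)+1)/2)
        - 2*(k:ℝ)*(2*(k:ℝ)+1) = 4*(k:ℝ)^2 + (n:ℝ) - 4*(k:ℝ) := by
      rw [hMcast]; ring
    rw [← htdef]
    linarith [hrec, ihm, ih2k, hid, hv3, e1, e2, e3, e4, e5, hK0]

/-- Let `f, g : ℕ → ℝ` satisfy `f(0) = g(0) = 0`,
`f(n) ≥ max_{0 ≤ k ≤ (n−1)/2} [k(n−2k) + 2g(n−2k−1)]`,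
`g(n) ≥ max_{0 ≤ k ≤ (n−1)/4} [k(n−4k) + g(n−4k−1) + 2g(2k)]`
(expressed by quantifying over every admissible `k`), together with `f(n) ≤ n²/4` and
`g(n) ≤ n(n+1)/8` for all `n`.  Then `lim_{n→∞} f(n)/(4n²) = 1/16`. -/
theorem eel_limit (f g : ℕ → ℝ) (hf0 : f 0 = 0) (hg0 : g 0 = 0)
    (hf : ∀ n k : ℕ, 2 * k + 1 ≤ n →
      (k : ℝ) * ((n : ℝ) - 2 * k) + 2 * g (n - 2 * k - 1) ≤ f n)
    (hg : ∀ n k : ℕ, 4 * k + 1 ≤ n →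
      (k : ℝ) * ((n : ℝ) - 4 * k) + g (n - 4 * k - 1) + 2 * g (2 * k) ≤ g n)
    (hfub : ∀ n : ℕ, f n ≤ (n : ℝ) ^ 2 / 4)
    (hgub : ∀ n : ℕ, g n ≤ (n : ℝ) * ((n : ℝ) + 1) / 8) :
    Filter.Tendsto (fun n : ℕ => f n / (4 * (n : ℝ) ^ 2)) Filter.atTop (nhds (1 / 16)) := by
  have hgpos : ∀ n : ℕ, 0 ≤ g n := by
    intro n
    induction n with
    | zero => rw [hg0]
    | succ n ihn =>
      have h := hg (n+1) 0 (by omega)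
      norm_num [hg0] at h
      linarith
  have hstar := eel_hstar g hg0 hg hgpos
  -- lower bound on f
  have hfl : ∀ n : ℕ, 1 ≤ n → (n:ℝ)*((n:ℝ)-1)/4 - 5*(n:ℝ)*Real.sqrt n ≤ f n := by
    intro n hn1
    have h := hf n 0 (by omega)
    norm_num at h
    have hst := hstar (n-1)
    have hc : ((n-1 : ℕ) : ℝ) = (n:ℝ) - 1 := by
      rw [Nat.cast_sub hn1]; norm_num
    rw [hc] at hst
    have hn1R : (1:ℝ) ≤ (n:ℝ) := by exact_mod_cast hn1
    have hsq : Real.sqrt ((n:ℝ) - 1) ≤ Real.sqrt n := Real.sqrt_le_sqrt (by linarith)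
    have hb : 10 * ((n:ℝ)-1) * Real.sqrt ((n:ℝ)-1) ≤ 10 * (n:ℝ) * Real.sqrt n := by
      apply mul_le_mul (by linarith) hsq (Real.sqrt_nonneg _) (by positivity)
    have hst2 : ((n:ℝ)-1) * ((n:ℝ)-1+1) / 2 - 4 * g (n-1) ≤ 10 * (n:ℝ) * Real.sqrt n :=
      le_trans hst hb
    have hexp : ((n:ℝ)-1) * ((n:ℝ)-1+1) / 2 = (n:ℝ)*((n:ℝ)-1)/2 := by ring
    rw [hexp] at hst2
    linarith [h, hst2]
  -- sqrt tends to infinity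
  have hsqrt : Filter.Tendsto (fun n : ℕ => Real.sqrt n) Filter.atTop Filter.atTop := by
    apply Filter.tendsto_atTop_atTop.mpr
    intro b
    refine ⟨(⌈b⌉₊)^2, fun a ha => ?_⟩
    have h1 : ((⌈b⌉₊:ℝ))^2 ≤ (a:ℝ) := by exact_mod_cast ha
    have h2 := Real.sqrt_le_sqrt h1
    rw [Real.sqrt_sq (Nat.cast_nonneg _)] at h2
    exact le_trans (Nat.le_ceil b) h2
  have hlow : Filter.Tendsto (fun n : ℕ => 1/16 - 2/Real.sqrt n) Filter.atTop (nhds (1/16)) := by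
    have h0 : Filter.Tendsto (fun n : ℕ => 2/Real.sqrt n) Filter.atTop (nhds 0) :=
      Filter.Tendsto.div_atTop tendsto_const_nhds hsqrt
    simpa using tendsto_const_nhds.sub h0
  refine tendsto_of_tendsto_of_tendsto_of_le_of_le' hlow tendsto_const_nhds ?_ ?_
  · -- eventual lower bound
    filter_upwards [Filter.eventually_ge_atTop 1] with n hn1
    have hn1R : (1:ℝ) ≤ (n:ℝ) := by exact_mod_cast hn1
    have ht2 : Real.sqrt n ^ 2 = (n : ℝ) := Real.sq_sqrt (by positivity)
    have ht1 : (1:ℝ) ≤ Real.sqrt n := by nlinarith [Real.sqrt_nonneg (n:ℝ), ht2]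
    have htpos : (0:ℝ) < Real.sqrt n := by linarith
    have htn : Real.sqrt n ≤ (n:ℝ) := by nlinarith [ht2, ht1]
    rw [le_div_iff₀ (by positivity)]
    have hexp : (1/16 - 2/Real.sqrt n) * (4*(n:ℝ)^2)
        = (n:ℝ)^2/4 - 8*(n:ℝ)^2/Real.sqrt n := by
      field_simp; ring
    have h1 : ((n:ℝ)/4 + 5*(n:ℝ)*Real.sqrt n) * Real.sqrt n ≤ 8*(n:ℝ)^2 := by
      have hnn : (n:ℝ)*Real.sqrt n ≤ (n:ℝ)*(n:ℝ) :=
        mul_le_mul_of_nonneg_left htn (by positivity)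
      nlinarith [ht2]
    have h2 : (n:ℝ)/4 + 5*(n:ℝ)*Real.sqrt n ≤ 8*(n:ℝ)^2/Real.sqrt n :=
      (le_div_iff₀ htpos).mpr h1
    rw [hexp]
    linarith [hfl n hn1, h2]
  · -- eventual upper bound
    filter_upwards with n
    rcases Nat.eq_zero_or_pos n with h0 | h1
    · subst h0; simp [hf0]
    · rw [div_le_iff₀ (by positivity : (0:ℝ) < 4*(n:ℝ)^2)]
      have := hfub n
      linarith
end

section
/- Let a(x,y), b(x,y) ≥ 0 be real numbers indexed by pairs (x,y) in a finite set P, with a(x,y) + b(x,y) ≤ N for all (x,y), Σ a(x,y) = 2a and Σ b(x,y) = 2b where a + b > 0. Then (1/4)·Σ_{(x,y)∈P} a(x,y)·b(x,y) ≤ N·a·b/(2(a+b)). -/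
private lemma harm_step (x y u v : ℝ) (hx : 0 ≤ x) (hy : 0 ≤ y) (hu : 0 ≤ u) (hv : 0 ≤ v) :
    x * y / (x + y) + u * v / (u + v) ≤ (x + u) * (y + v) / ((x + y) + (u + v)) := by
  rcases eq_or_lt_of_le (by positivity : (0:ℝ) ≤ x + y) with h1 | h1
  · have hx0 : x = 0 := by linarith
    have hy0 : y = 0 := by linarith
    simp [hx0, hy0]
  rcases eq_or_lt_of_le (by positivity : (0:ℝ) ≤ u + v) with h2 | h2
  · have hu0 : u = 0 := by linarith
    have hv0 : v = 0 := by linarith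
    simp [hu0, hv0]
  have h3 : 0 < (x + y) + (u + v) := by linarith
  rw [div_add_div _ _ (ne_of_gt h1) (ne_of_gt h2), div_le_div_iff₀ (by positivity) h3]
  nlinarith [sq_nonneg (x * v - y * u)]

private lemma harm_sum {P : Type*} (s : Finset P) (a b : P → ℝ)
    (ha : ∀ p, 0 ≤ a p) (hb : ∀ p, 0 ≤ b p) :
    ∑ p ∈ s, a p * b p / (a p + b p) ≤
      (∑ p ∈ s, a p) * (∑ p ∈ s, b p) / ((∑ p ∈ s, a p) + (∑ p ∈ s, b p)) := by
  classical
  induction s using Finset.induction with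
  | empty => simp
  | @insert p s hps ih =>
    rw [Finset.sum_insert hps, Finset.sum_insert hps, Finset.sum_insert hps]
    calc a p * b p / (a p + b p) + ∑ q ∈ s, a q * b q / (a q + b q)
        ≤ a p * b p / (a p + b p) +
            (∑ q ∈ s, a q) * (∑ q ∈ s, b q) / ((∑ q ∈ s, a q) + (∑ q ∈ s, b q)) := by
          linarith [ih]
      _ ≤ (a p + ∑ q ∈ s, a q) * (b p + ∑ q ∈ s, b q) /
            ((a p + b p) + ((∑ q ∈ s, a q) + (∑ q ∈ s, b q))) :=
          harm_step _ _ _ _ (ha p) (hb p)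
            (Finset.sum_nonneg fun q _ => ha q) (Finset.sum_nonneg fun q _ => hb q)
      _ = (a p + ∑ q ∈ s, a q) * (b p + ∑ q ∈ s, b q) /
            ((a p + ∑ q ∈ s, a q) + (b p + ∑ q ∈ s, b q)) := by ring_nf

/-- Let `a(x,y), b(x,y) ≥ 0` be real numbers indexed by a finite set `P`,
with `a + b ≤ N` pointwise, `Σ a = 2A` and `Σ b = 2B` where `A + B > 0` (and `N > 0`).
Then `(1/4)·Σ a·b ≤ N·A·B/(2(A+B))`. -/
theorem relaxed_optimization_bound
    {P : Type*} [Fintype P] (N A B : ℝ) (hN : 0 < N)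
    (a b : P → ℝ) (ha : ∀ p, 0 ≤ a p) (hb : ∀ p, 0 ≤ b p)
    (hab : ∀ p, a p + b p ≤ N)
    (hsa : ∑ p, a p = 2 * A) (hsb : ∑ p, b p = 2 * B) (hAB : 0 < A + B) :
    (1 / 4) * ∑ p, a p * b p ≤ N * A * B / (2 * (A + B)) := by
  have key : ∑ p, a p * b p ≤ N * ∑ p, a p * b p / (a p + b p) := by
    rw [Finset.mul_sum]
    apply Finset.sum_le_sum
    intro p _
    rcases eq_or_lt_of_le (by have := ha p; have := hb p; positivity : (0:ℝ) ≤ a p + b p)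
      with h | h
    · have hx0 : a p = 0 := by have := ha p; have := hb p; linarith
      simp [hx0]
    · rw [mul_div_assoc']
      rw [le_div_iff₀ h]
      have hq : 0 ≤ a p * b p := mul_nonneg (ha p) (hb p)
      nlinarith [hab p]
  have hs := harm_sum Finset.univ a b ha hb
  rw [hsa, hsb] at hs
  have h2 : (2 * A) * (2 * B) / (2 * A + 2 * B) = 2 * (A * B) / (A + B) := by
    rw [show (2:ℝ) * A + 2 * B = 2 * (A + B) by ring, mul_div_mul_comm]
    ring
  have hfin : ∑ p, a p * b p ≤ N * (2 * (A * B) / (A + B)) := by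
    calc ∑ p, a p * b p ≤ N * ∑ p, a p * b p / (a p + b p) := key
      _ ≤ N * (2 * (A * B) / (A + B)) := by
          apply mul_le_mul_of_nonneg_left _ hN.le
          rw [← h2]; exact hs
  have heq : N * (2 * (A * B) / (A + B)) = 4 * (N * A * B / (2 * (A + B))) := by
    field_simp
    ring
  linarith [hfin, heq ▸ hfin]
end
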